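/- arXiv:1701.05895 — 3 statements merged into one kernel-verified Lean document; each statement's English description precedes it below -/
import Mathlib

section
/- Let θ be a real number and let S = ℤ + θℤ denote the additive subgroup of ℝ generated by 1 and θ, equipped with the order induced from ℝ. If h : S → S is an additive group homomorphism that is positive (i.e., for every z ∈ S with 0 ≤ z one has 0 ≤ h(z)), then h is a multiple of the identity: for every z ∈ S, h(z) = h(1)·z. -/
/-- **Lemma 6.1.** Let `θ` be a real number and `S = ℤ + θℤ` the additive subgroup of `ℝ`
generated by `1` and `θ`, with the order induced from `ℝ`. Every positive additive group
homomorphism `h : S → S` is a multiple of the identity: `h z = h 1 * z` for all `z ∈ S`. -/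
theorem positive_hom_of_int_add_theta_int_is_mul_identity
    (θ : ℝ) (S : AddSubgroup ℝ) (hS : S = AddSubgroup.closure ({1, θ} : Set ℝ))
    (h : S →+ S)
    (hpos : ∀ z : S, 0 ≤ (z : ℝ) → 0 ≤ (h z : ℝ))
    (one : S) (hone : (one : ℝ) = 1) :
    ∀ z : S, (h z : ℝ) = (h one : ℝ) * (z : ℝ) := by
  intro z
  set a : ℝ := (h one : ℝ) with ha
  have ha0 : 0 ≤ a := hpos one (by rw [hone]; norm_num)
  -- key inequality: p ≤ q z ⇒ p a ≤ q (h z)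
  have key : ∀ p q : ℤ, (p : ℝ) ≤ (q : ℝ) * z → (p : ℝ) * a ≤ (q : ℝ) * (h z : ℝ) := by
    intro p q hpq
    have hmem : (0 : ℝ) ≤ ((q • z - p • one : S) : ℝ) := by
      push_cast [hone]
      simp only [zsmul_eq_mul]
      linarith
    have hp := hpos _ hmem
    have heq : ((h (q • z - p • one) : S) : ℝ) = q * (h z : ℝ) - p * a := by
      rw [map_sub, map_zsmul, map_zsmul]
      push_cast
      simp only [zsmul_eq_mul]
      rfl
    rw [heq] at hp
    linarith
  have key' : ∀ p q : ℤ, (q : ℝ) * z ≤ (p : ℝ) → (q : ℝ) * (h z : ℝ) ≤ (p : ℝ) * a := by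
    intro p q hpq
    have := key (-p) (-q) (by push_cast; linarith)
    push_cast at this
    linarith
  have bound : ∀ n : ℕ, 0 < n → |(h z : ℝ) - a * z| * n ≤ a := by
    intro n hn
    set p : ℤ := ⌊(n : ℝ) * z⌋ with hp
    have h1 : (p : ℝ) ≤ (n : ℝ) * z := Int.floor_le _
    have h2 : (n : ℝ) * z ≤ (p : ℝ) + 1 := le_of_lt (Int.lt_floor_add_one _)
    have k1 := key p n (by exact_mod_cast h1)
    have k2 := key' (p + 1) n (by push_cast; linarith)
    push_cast at k1 k2
    have m1 : (p : ℝ) * a ≤ (n : ℝ) * z * a := by nlinarith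
    have m2 : (n : ℝ) * z * a ≤ ((p : ℝ) + 1) * a := by nlinarith
    rw [← abs_of_nonneg (show (0:ℝ) ≤ (n:ℝ) by positivity), ← abs_mul, abs_le]
    constructor <;> nlinarith
  by_contra hne
  have hd : 0 < |(h z : ℝ) - a * z| := by
    rw [abs_pos]
    intro hc
    apply hne
    linarith [sub_eq_zero.mp hc]
  obtain ⟨n, hn⟩ := exists_nat_gt (a / |(h z : ℝ) - a * z|)
  have hn0 : 0 < n := by
    by_contra hc
    push_neg at hc
    interval_cases n
    simp at hn
    exact absurd hn (not_lt.mpr (div_nonneg ha0 hd.le))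
  have := bound n hn0
  have : a / |(h z : ℝ) - a * z| ≥ n := by
    rw [ge_iff_le, le_div_iff₀ hd]
    linarith [bound n hn0]
  linarith
end

section
/- Let θ be an irrational real number that is non-quadratic, i.e., for all integers a, b, c, if a·θ² + b·θ + c = 0 then a = b = c = 0. Let S = ℤ + θℤ be the additive subgroup of ℝ generated by 1 and θ, and let h : S → S be a positive additive group homomorphism (0 ≤ z implies 0 ≤ h(z) for z ∈ S). Then h(1) is a nonnegative integer: there exists n ∈ ℕ with h(1) = n. -/
/-- **Remark 6.2.** If `θ` is irrational and non-quadratic, then for every positive additive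
group homomorphism `h` of `S = ℤ + θℤ` the factor `h 1` is a nonnegative integer. -/
theorem positive_hom_factor_is_nat_of_nonquadratic
    (θ : ℝ) (hirr : Irrational θ)
    (hquad : ∀ a b c : ℤ, (a : ℝ) * θ ^ 2 + (b : ℝ) * θ + (c : ℝ) = 0 → a = 0 ∧ b = 0 ∧ c = 0)
    (S : AddSubgroup ℝ) (hS : S = AddSubgroup.closure ({1, θ} : Set ℝ))
    (h : S →+ S)
    (hpos : ∀ z : S, 0 ≤ (z : ℝ) → 0 ≤ (h z : ℝ))
    (one : S) (hone : (one : ℝ) = 1) :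
    ∃ n : ℕ, (h one : ℝ) = n := by
  have memS : ∀ x : ℝ, x ∈ S ↔ ∃ m n : ℤ, (m : ℝ) + n * θ = x := by
    intro x
    rw [hS, AddSubgroup.mem_closure_pair]
    constructor
    · rintro ⟨m, n, rfl⟩; exact ⟨m, n, by push_cast [zsmul_eq_mul]; ring⟩
    · rintro ⟨m, n, rfl⟩; exact ⟨m, n, by push_cast [zsmul_eq_mul]; ring⟩
  have hθS : θ ∈ S := (memS θ).2 ⟨0, 1, by simp⟩
  set t : S := ⟨θ, hθS⟩ with ht
  set c : ℝ := (h one : ℝ) with hc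
  have hc0 : 0 ≤ c := hpos one (by rw [hone]; norm_num)
  -- monotonicity-derived inequality: for integers p q, p ≤ q θ → p c ≤ q (h t)
  have key : ∀ p q : ℤ, (p : ℝ) ≤ q * θ → (p : ℝ) * c ≤ q * (h t : ℝ) := by
    intro p q hpq
    have := hpos (q • t - p • one) (by
      push_cast [zsmul_eq_mul, hone, ht]
      simpa using sub_nonneg.2 hpq)
    rw [map_sub, map_zsmul, map_zsmul] at this
    push_cast [zsmul_eq_mul] at this
    linarith [this]
  -- h t = c * θ
  have hht : (h t : ℝ) = c * θ := by
    by_contra hne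
    rcases lt_or_gt_of_ne hne with hlt | hgt
    · -- h t < c θ : pick rational p/q < θ with p/q c > h t
      -- for all rationals r < θ, r c ≤ h t, so sup gives c θ ≤ h t, contradiction
      have : ∀ r : ℚ, (r : ℝ) < θ → (r : ℝ) * c ≤ (h t : ℝ) := by
        intro r hr
        have hq : (0 : ℤ) < r.den := by exact_mod_cast r.pos
        have h1 : ((r.num : ℝ)) ≤ (r.den : ℤ) * θ := by
          have : (r : ℝ) = (r.num : ℝ) / (r.den : ℝ) := by
            rw [Rat.cast_def]
          rw [this] at hr
          have hd : (0:ℝ) < (r.den : ℝ) := by exact_mod_cast r.pos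
          rw [div_lt_iff₀ hd] at hr
          push_cast
          linarith
        have := key r.num r.den h1
        have hd : (0:ℝ) < (r.den : ℝ) := by exact_mod_cast r.pos
        have hrc : (r : ℝ) = (r.num : ℝ) / (r.den : ℝ) := by rw [Rat.cast_def]
        rw [hrc, div_mul_eq_mul_div, div_le_iff₀ hd]
        push_cast at this ⊢
        linarith
      -- hence c θ ≤ h t
      have : c * θ ≤ (h t : ℝ) := by
        by_contra hcon
        push_neg at hcon
        rcases eq_or_lt_of_le hc0 with hc' | hc'
        · -- c = 0
          obtain ⟨r, hr⟩ := exists_rat_lt θ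
          have := this r hr
          rw [← hc'] at hcon
          nlinarith [this]
        · obtain ⟨r, hr1, hr2⟩ := exists_rat_btwn (show (h t : ℝ) / c < θ by
            rw [div_lt_iff₀ hc']; nlinarith)
          have := this r hr2
          rw [div_lt_iff₀ hc'] at hr1
          nlinarith
      linarith
    · -- h t > c θ
      have : ∀ r : ℚ, θ < (r : ℝ) → (h t : ℝ) ≤ (r : ℝ) * c := by
        intro r hr
        have h1 : ((-r.num : ℤ) : ℝ) ≤ ((-r.den : ℤ) : ℝ) * θ := by
          have hrc : (r : ℝ) = (r.num : ℝ) / (r.den : ℝ) := by rw [Rat.cast_def]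
          have hd : (0:ℝ) < (r.den : ℝ) := by exact_mod_cast r.pos
          rw [hrc, lt_div_iff₀ hd] at hr
          push_cast
          nlinarith
        have := key (-r.num) (-r.den) h1
        have hd : (0:ℝ) < (r.den : ℝ) := by exact_mod_cast r.pos
        have hrc : (r : ℝ) = (r.num : ℝ) / (r.den : ℝ) := by rw [Rat.cast_def]
        rw [hrc, div_mul_eq_mul_div, le_div_iff₀ hd]
        push_cast at this ⊢
        nlinarith
      have : (h t : ℝ) ≤ c * θ := by
        by_contra hcon
        push_neg at hcon
        rcases eq_or_lt_of_le hc0 with hc' | hc'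
        · obtain ⟨r, hr⟩ := exists_rat_gt θ
          have := this r hr
          rw [← hc'] at hcon
          nlinarith
        · obtain ⟨r, hr1, hr2⟩ := exists_rat_btwn (show θ < (h t : ℝ) / c by
            rw [lt_div_iff₀ hc']; nlinarith)
          have := this r hr1
          rw [lt_div_iff₀ hc'] at hr2
          nlinarith
      linarith
  -- now c ∈ S and c θ ∈ S
  obtain ⟨p, q, hpq⟩ := (memS c).1 (h one).2
  obtain ⟨m, n, hmn⟩ := (memS (c * θ)).1 (hht ▸ (h t).2)
  -- (p + q θ) θ = m + n θ  ⇒  q θ² + (p - n) θ - m = 0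
  have heq : (q : ℝ) * θ ^ 2 + ((p - n : ℤ) : ℝ) * θ + ((-m : ℤ) : ℝ) = 0 := by
    push_cast
    linear_combination θ * hpq - hmn
  obtain ⟨hq0, hpn, hm0⟩ := hquad q (p - n) (-m) heq
  have hcp : c = (p : ℝ) := by rw [← hpq, hq0]; push_cast; ring
  have hp0 : 0 ≤ p := by exact_mod_cast hcp ▸ hc0
  exact ⟨p.toNat, by show c = _; rw [hcp]; exact_mod_cast (Int.toNat_of_nonneg hp0).symm⟩
end

section
/- Let G be a finite group. Consider the subring R of the ring of functions G → ℂ (with pointwise operations) generated by the characters of all finite-dimensional complex representations of G. Let r : R → ℂ be a ring homomorphism such that for every irreducible (simple) finite-dimensional complex representation V of G, r(χ_V) is a real number with r(χ_V) > 0. Then for every finite-dimensional complex representation V of G, r(χ_V) = dim V. -/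
open CategoryTheory

set_option linter.unusedSectionVars false
set_option synthInstance.maxHeartbeats 400000
set_option maxHeartbeats 1000000

noncomputable section Lemma63Aux

namespace Lemma63

open Module LinearMap

variable {G : Type} [Group G] [Fintype G]

/-- A `G`-invariant subspace of a representation. -/
def Inv (V : FDRep ℂ G) (p : Submodule ℂ V) : Prop := ∀ (g : G), ∀ x ∈ p, V.ρ g x ∈ p

/-- The subrepresentation on an invariant subspace. -/
def subRep (V : FDRep ℂ G) (p : Submodule ℂ V) (hp : Inv V p) : FDRep ℂ G :=
  FDRep.of
    { toFun := fun g => (V.ρ g).restrict (fun x hx => hp g x hx)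
      map_one' := by
        apply LinearMap.ext; intro x
        apply Subtype.ext
        simp [LinearMap.restrict_coe_apply]
      map_mul' := fun g h => by
        apply LinearMap.ext; intro x
        apply Subtype.ext
        simp [LinearMap.restrict_coe_apply, Module.End.mul_apply] }

lemma subRep_character (V : FDRep ℂ G) (p : Submodule ℂ V) (hp : Inv V p) (g : G) :
    (subRep V p hp).character g = trace ℂ p ((V.ρ g).restrict (fun x hx => hp g x hx)) := rfl

lemma subRep_finrank (V : FDRep ℂ G) (p : Submodule ℂ V) (hp : Inv V p) :
    finrank ℂ (subRep V p hp) = finrank ℂ p := rfl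

/-- Characters are additive over invariant complements. -/
lemma character_add_of_isCompl (V : FDRep ℂ G) {p q : Submodule ℂ V} (hp : Inv V p) (hq : Inv V q)
    (h : IsCompl p q) (g : G) :
    V.character g = (subRep V p hp).character g + (subRep V q hq).character g := by
  classical
  set fp := (V.ρ g).restrict (fun x hx => hp g x hx) with hfp
  set fq := (V.ρ g).restrict (fun x hx => hq g x hx) with hfq
  let e : (p × q) ≃ₗ[ℂ] V := Submodule.prodEquivOfIsCompl p q h
  have he : ∀ z : p × q, (e z : V) = (z.1 : V) + (z.2 : V) := by
    intro z
    rfl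
  have key : e.conj (fp.prodMap fq) = V.ρ g := by
    apply LinearMap.ext; intro v
    obtain ⟨z, rfl⟩ := e.surjective v
    rw [LinearEquiv.conj_apply]
    simp only [LinearMap.comp_apply, LinearEquiv.coe_coe, LinearEquiv.symm_apply_apply]
    rw [he, he, map_add]
    simp only [LinearMap.prodMap_apply]
    rw [LinearMap.restrict_coe_apply, LinearMap.restrict_coe_apply]
  have hchar : V.character g = trace ℂ V (V.ρ g) := rfl
  rw [hchar, ← key, trace_conj', trace_prodMap', subRep_character, subRep_character]

/-- Maschke: every invariant subspace has an invariant complement. -/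
lemma exists_isCompl_inv (V : FDRep ℂ G) (p : Submodule ℂ V) (hp : Inv V p) :
    ∃ q : Submodule ℂ V, Inv V q ∧ IsCompl p q := by
  classical
  obtain ⟨π₀, hπ₀⟩ := p.subtype.exists_leftInverse_of_injective p.ker_subtype
  set π₁ : V →ₗ[ℂ] V := p.subtype ∘ₗ π₀ with hπ₁
  have hπ₁mem : ∀ v : V, π₁ v ∈ p := fun v => (π₀ v).2
  have hπ₁id : ∀ x ∈ p, π₁ x = x := by
    intro x hx
    have h2 := LinearMap.congr_fun hπ₀ (⟨x, hx⟩ : p)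
    have := congrArg (Submodule.subtype p) h2
    simpa [π₁] using this
  set T : V →ₗ[ℂ] V :=
    (Fintype.card G : ℂ)⁻¹ • ∑ g : G, ((V.ρ g⁻¹) ∘ₗ π₁ ∘ₗ (V.ρ g)) with hT
  have hcard : (Fintype.card G : ℂ) ≠ 0 := Nat.cast_ne_zero.mpr Fintype.card_ne_zero
  have hTapply : ∀ v : V, T v = (Fintype.card G : ℂ)⁻¹ • ∑ g : G, V.ρ g⁻¹ (π₁ (V.ρ g v)) := by
    intro v
    simp [hT, LinearMap.sum_apply]
  have hTmem : ∀ v : V, T v ∈ p := by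
    intro v
    rw [hTapply]
    exact Submodule.smul_mem _ _ (Submodule.sum_mem _ fun g _ => hp g⁻¹ _ (hπ₁mem _))
  have hTid : ∀ x ∈ p, T x = x := by
    intro x hx
    rw [hTapply]
    have : ∀ g : G, V.ρ g⁻¹ (π₁ (V.ρ g x)) = x := by
      intro g
      rw [hπ₁id _ (hp g x hx), ← Module.End.mul_apply, ← map_mul, inv_mul_cancel, map_one,
        Module.End.one_apply]
    rw [Finset.sum_congr rfl fun g _ => this g, Finset.sum_const, Finset.card_univ,
      ← Nat.cast_smul_eq_nsmul (R := ℂ), smul_smul, inv_mul_cancel₀ hcard, one_smul]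
  have hTcomm : ∀ h : G, T ∘ₗ V.ρ h = V.ρ h ∘ₗ T := by
    intro h
    apply LinearMap.ext; intro v
    simp only [LinearMap.comp_apply]
    rw [hTapply, hTapply, map_smul]
    congr 1
    rw [map_sum]
    refine Fintype.sum_bijective (· * h) (Group.mulRight_bijective h) _ _ fun g => ?_
    have h1 : V.ρ (g * h) v = V.ρ g (V.ρ h v) := by rw [map_mul, Module.End.mul_apply]
    have h2 : ∀ y : V, V.ρ h (V.ρ (g * h)⁻¹ y) = V.ρ g⁻¹ y := by
      intro y
      rw [← Module.End.mul_apply, ← map_mul]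
      congr 1
      group
    rw [h1, h2]
  set T' : V →ₗ[ℂ] p := T.codRestrict p hTmem with hT'
  have hT'id : ∀ x : p, T' x = x := fun x => Subtype.ext (hTid x x.2)
  refine ⟨LinearMap.ker T', ?_, LinearMap.isCompl_of_proj hT'id⟩
  intro g x hx
  have hx0 : T x = 0 := by
    have := congrArg (Submodule.subtype p) hx
    simpa [hT'] using this
  rw [LinearMap.mem_ker]
  apply Subtype.ext
  have : T (V.ρ g x) = V.ρ g (T x) := LinearMap.congr_fun (hTcomm g) x
  simp [hT', this, hx0]

lemma hom_injective {Y V : FDRep ℂ G} (f : Y ⟶ V) [Mono f] :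
    Function.Injective f.hom := by
  have hmono : Mono ((Action.forget (FGModuleCat ℂ) (MonCat.of G)).map f) :=
    Functor.map_mono _ f
  rw [← LinearMap.ker_eq_bot]
  by_contra hker
  obtain ⟨z, hz, hz0⟩ := Submodule.exists_mem_ne_zero_of_ne_bot hker
  let g₁ : FGModuleCat.of ℂ ℂ ⟶ Y.V := FGModuleCat.ofHom (LinearMap.toSpanSingleton ℂ Y z)
  have : g₁ ≫ f.hom = (0 : FGModuleCat.of ℂ ℂ ⟶ Y.V) ≫ f.hom := by
    ext c
    simp [g₁, LinearMap.mem_ker.mp hz]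
    change f.hom.hom.hom ((1 : ℂ) • z) = 0
    rw [one_smul]; exact LinearMap.mem_ker.mp hz
  have := (cancel_mono ((Action.forget (FGModuleCat ℂ) (MonCat.of G)).map f)).mp this
  have h1 : (1 : ℂ) • z = 0 := by
    have h := ConcreteCategory.congr_hom this (1 : ℂ); exact h
  rw [one_smul] at h1
  exact hz0 h1

/-- A nonzero representation with no nontrivial invariant subspaces is simple. -/
lemma simple_of_irreducible (V : FDRep ℂ G) (h0 : finrank ℂ V ≠ 0)
    (hirr : ∀ p : Submodule ℂ V, Inv V p → p = ⊥ ∨ p = ⊤) : Simple V := by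
  haveI : Nontrivial V := Module.nontrivial_of_finrank_pos (R := ℂ) (Nat.pos_of_ne_zero h0)
  constructor
  intro Y f hmono
  constructor
  · intro hiso hf0
    have hiso0 : IsIso (0 : Y ⟶ V) := hf0 ▸ hiso
    have hid : 𝟙 V = (0 : V ⟶ V) := by
      rw [← IsIso.inv_hom_id (0 : Y ⟶ V), Limits.comp_zero]
    obtain ⟨v, hv⟩ := exists_ne (0 : V)
    apply hv
    have := congrArg Action.Hom.hom hid
    have h2 := ConcreteCategory.congr_hom this v
    exact h2
  · intro hf0
    have hinj : Function.Injective f.hom := hom_injective f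
    have hrng : Inv V (LinearMap.range f.hom.hom.hom) := by
      rintro g x ⟨y, rfl⟩
      refine ⟨Y.ρ g y, ?_⟩
      have := ConcreteCategory.congr_hom (f.comm g) y
      exact this
    have hne : LinearMap.range f.hom.hom.hom ≠ ⊥ := by
      intro h
      have h2 : f.hom.hom.hom = 0 := LinearMap.range_eq_bot.mp h
      exact hf0 (by ext : 1; exact FGModuleCat.hom_ext h2)
    have htop : LinearMap.range f.hom.hom.hom = ⊤ := (hirr _ hrng).resolve_left hne
    have hsurj : Function.Surjective f.hom := LinearMap.range_eq_top.mp htop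
    let e : (↑Y.V) ≃ₗ[ℂ] (↑V.V) := LinearEquiv.ofBijective f.hom.hom.hom ⟨hinj, hsurj⟩
    have hsymm : ∀ g : G, ∀ v : ↑V.V, e.symm (V.ρ g v) = Y.ρ g (e.symm v) := by
      intro g v
      apply hinj
      show f.hom _ = f.hom _
      have h1 : f.hom (e.symm (V.ρ g v)) = V.ρ g v := e.apply_symm_apply _
      have h2 : f.hom (Y.ρ g (e.symm v)) = V.ρ g (f.hom (e.symm v)) :=
        ConcreteCategory.congr_hom (f.comm g) (e.symm v)
      rw [h1, h2]
      congr 1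
      exact (e.apply_symm_apply v).symm
    let finv : V ⟶ Y :=
      ⟨FGModuleCat.ofHom e.symm.toLinearMap, fun g => FGModuleCat.hom_ext (LinearMap.ext fun v => (hsymm g v))⟩
    refine ⟨finv, ?_, ?_⟩
    · ext y
      show e.symm (f.hom y) = y
      exact e.symm_apply_apply y
    · ext v
      show f.hom (e.symm v) = v
      exact e.apply_symm_apply v

/-- Every finite-dimensional representation has a character that is a sum of characters of
simple representations. -/
lemma exists_decomp_aux :
    ∀ (n : ℕ) (V : FDRep ℂ G), finrank ℂ V = n →
      ∃ s : Multiset (FDRep ℂ G), (∀ W ∈ s, Simple W) ∧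
        V.character = (s.map FDRep.character).sum := by
  intro n
  induction n using Nat.strong_induction_on with
  | _ n ih =>
    intro V hV
    by_cases hn0 : n = 0
    · subst hn0
      haveI : Subsingleton V := (Module.finrank_zero_iff (R := ℂ)).mp hV
      refine ⟨0, by simp, ?_⟩
      funext g
      have : V.ρ g = 0 := Subsingleton.elim _ _
      show trace ℂ V (V.ρ g) = _
      rw [this]
      simp
    · by_cases hs : Simple V
      · exact ⟨{V}, by simpa using hs, by simp⟩
      · have h0 : finrank ℂ V ≠ 0 := by rw [hV]; exact hn0
        have hirr : ¬ ∀ p : Submodule ℂ V, Inv V p → p = ⊥ ∨ p = ⊤ :=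
          fun hi => hs (simple_of_irreducible V h0 hi)
        push_neg at hirr
        obtain ⟨p, hpInv, hpbot, hptop⟩ := hirr
        obtain ⟨q, hqInv, hcompl⟩ := exists_isCompl_inv V p hpInv
        have hqtop : q ≠ ⊤ := by
          intro hq
          apply hpbot
          have := hcompl.disjoint
          rw [hq, disjoint_top] at this
          exact this
        have hplt : finrank ℂ p < n := hV ▸ Submodule.finrank_lt hptop
        have hqlt : finrank ℂ q < n := hV ▸ Submodule.finrank_lt hqtop
        obtain ⟨s1, hs1, hc1⟩ := ih _ hplt (subRep V p hpInv) (subRep_finrank V p hpInv)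
        obtain ⟨s2, hs2, hc2⟩ := ih _ hqlt (subRep V q hqInv) (subRep_finrank V q hqInv)
        refine ⟨s1 + s2, ?_, ?_⟩
        · intro W hW
          rcases Multiset.mem_add.mp hW with h | h
          · exact hs1 W h
          · exact hs2 W h
        · funext g
          rw [character_add_of_isCompl V hpInv hqInv hcompl g, hc1, hc2]
          simp

lemma exists_decomp (V : FDRep ℂ G) :
    ∃ s : Multiset (FDRep ℂ G), (∀ W ∈ s, Simple W) ∧
      V.character = (s.map FDRep.character).sum :=
  exists_decomp_aux (finrank ℂ V) V rfl

/-- The regular representation of a finite group. -/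
def reg (G : Type) [Group G] [Fintype G] : FDRep ℂ G :=
  FDRep.of (Representation.ofMulAction ℂ G G)

open scoped Classical in
lemma reg_char (g : G) :
    (reg G).character g = if g = 1 then (Fintype.card G : ℂ) else 0 := by
  classical
  have h : (reg G).character g = trace ℂ (MonoidAlgebra ℂ G) (Representation.ofMulAction ℂ G G g) := rfl
  rw [h, trace_eq_matrix_trace ℂ (MonoidAlgebra.basis G ℂ), Matrix.trace]
  have hdiag : ∀ h : G,
      (LinearMap.toMatrix (MonoidAlgebra.basis G ℂ) (MonoidAlgebra.basis G ℂ)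
        (Representation.ofMulAction ℂ G G g)).diag h = if g = 1 then 1 else 0 := by
    intro h
    rw [Matrix.diag_apply, LinearMap.toMatrix_apply]
    simp only [MonoidAlgebra.basis_apply, Representation.ofMulAction_single, smul_eq_mul]
    simp [MonoidAlgebra.basis, Finsupp.single_apply]
  rw [Finset.sum_congr rfl fun h _ => hdiag h]
  by_cases hg : g = 1 <;> simp [hg, Finset.card_univ]

end Lemma63

end Lemma63Aux

open Lemma63

/-- **Lemma 6.3 (classical case).** Let `G` be a finite group and `R` the subring of the
ring of functions `G → ℂ` generated by the characters of all finite-dimensional complex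
representations of `G`. If `r : R → ℂ` is a ring homomorphism that takes a positive real
value on the character of every irreducible representation, then `r` sends the character
of every finite-dimensional representation `V` to `dim V`. -/
theorem ringHom_on_character_ring_eq_dim
    {G : Type} [Group G] [Fintype G]
    (R : Subring (G → ℂ))
    (hR : R = Subring.closure (Set.range fun V : FDRep ℂ G => V.character))
    (hmem : ∀ V : FDRep ℂ G, V.character ∈ R)
    (r : R →+* ℂ)
    (hpos : ∀ V : FDRep ℂ G, Simple V →
      ∃ x : ℝ, 0 < x ∧ r ⟨V.character, hmem V⟩ = (x : ℂ)) :
    ∀ V : FDRep ℂ G, r ⟨V.character, hmem V⟩ = (Module.finrank ℂ V : ℂ) := by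
  classical
  have char_mul_reg : ∀ (V : FDRep ℂ G) (g : G),
      V.character g * (reg G).character g
        = (Module.finrank ℂ V : ℂ) * (reg G).character g := by
    intro V g
    by_cases hg : g = 1
    · subst hg; rw [FDRep.char_one]
    · rw [reg_char, if_neg hg, mul_zero, mul_zero]
  set χ : FDRep ℂ G → R := fun W => (⟨W.character, hmem W⟩ : R) with hχ
  have possum : ∀ t : Multiset (FDRep ℂ G), (∀ W ∈ t, Simple W) →
      ∃ y : ℝ, 0 ≤ y ∧ ((t.map fun W => r (χ W)).sum = (y : ℂ)) ∧ (t ≠ 0 → 0 < y) := by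
    intro t
    induction t using Multiset.induction_on with
    | empty => intro _; exact ⟨0, le_refl _, by simp, fun h => absurd rfl h⟩
    | cons a t iht =>
      intro hsimp
      obtain ⟨y, hy0, hysum, _⟩ := iht (fun W hW => hsimp W (Multiset.mem_cons_of_mem hW))
      obtain ⟨x, hx0, hxa⟩ := hpos a (hsimp a (Multiset.mem_cons_self a t))
      refine ⟨x + y, by positivity, ?_, fun _ => by positivity⟩
      rw [Multiset.map_cons, Multiset.sum_cons, hysum, hxa]
      push_cast
      ring
  obtain ⟨s, hsimp, hchar⟩ := exists_decomp (reg G)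
  have hcoe : ∀ t : Multiset R, ((t.sum : R) : G → ℂ) = (t.map R.subtype).sum := by
    intro t
    induction t using Multiset.induction_on with
    | empty => simp
    | cons a t iht => simp [iht]
  have hchireg : χ (reg G) = (s.map χ).sum := by
    apply Subtype.ext
    show (reg G).character = (((s.map χ).sum : R) : G → ℂ)
    rw [hcoe, Multiset.map_map, hchar]
    rfl
  have hrreg : r (χ (reg G)) = ((s.map fun W => r (χ W)).sum) := by
    rw [hchireg, map_multiset_sum, Multiset.map_map]
    rfl
  have hs0 : s ≠ 0 := by
    intro h
    rw [h] at hchar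
    simp only [Multiset.map_zero, Multiset.sum_zero] at hchar
    have h1 := congrFun hchar 1
    rw [reg_char, if_pos rfl] at h1
    simp only [Pi.zero_apply, Nat.cast_eq_zero] at h1
    exact Fintype.card_ne_zero h1
  obtain ⟨y, hy0, hysum, hypos⟩ := possum s hsimp
  have hrpos : r (χ (reg G)) = (y : ℂ) := by rw [hrreg, hysum]
  have hrne : r (χ (reg G)) ≠ 0 := by
    rw [hrpos]
    exact_mod_cast (hypos hs0).ne'
  intro V
  have key : χ V * χ (reg G) = (Module.finrank ℂ V) • χ (reg G) := by
    apply Subtype.ext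
    funext g
    show V.character g * (reg G).character g
      = ((Module.finrank ℂ V) • (reg G).character) g
    rw [char_mul_reg V g, Pi.smul_apply, nsmul_eq_mul]
  have h2 := congrArg r key
  rw [map_mul, map_nsmul, nsmul_eq_mul] at h2
  have h3 : r (χ V) * r (χ (reg G)) = ((Module.finrank ℂ V : ℂ)) * r (χ (reg G)) := by
    rw [h2]
  exact mul_right_cancel₀ hrne h3
end
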